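/- Let v₁ = (0,0,0), v₂ = (1000,0,0), v₃ = (392,794,0), v₄ = (−369,229,319), v₅ = (423,839,330), v₆ = (220,−113,101), v₇ = (306,800,−299), v₈ = (676,367,523), v₉ = (−253,519,185), v₁₀ = (709,705,−13) in ℝ³, and define edge vectors eᵢ = v_{i+1} − vᵢ for i = 1, …, 9 and e₁₀ = v₁ − v₁₀. Then there is no w ∈ ℝ³ such that (−1)^{i+1} (w · eᵢ) > 0 for every i ∈ {1, …, 10}. -/

import Mathlib

/-- The vertices of the paper's 10-stick polygonal realization of the knot `8_1`.
Here `vert8_1 i` is the paper's vertex `v_(i+1)`. -/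
noncomputable def vert8_1 : Fin 10 → (Fin 3 → ℝ) :=
  ![![0, 0, 0], ![1000, 0, 0], ![392, 794, 0], ![-369, 229, 319], ![423, 839, 330], ![220, -113, 101], ![306, 800, -299], ![676, 367, 523], ![-253, 519, 185], ![709, 705, -13]]

/-- The edge vectors `eᵢ = v_(i+1) − vᵢ` (cyclically, so `e₁₀ = v₁ − v₁₀`);
here `edge8_1 i` is the paper's `e_(i+1)`, using wrap-around addition on `Fin 10`. -/
noncomputable def edge8_1 (i : Fin 10) : Fin 3 → ℝ :=
  vert8_1 (i + 1) - vert8_1 i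

/-- There is no `w ∈ ℝ³` such that `(−1)^(i+1) (w · eᵢ) > 0` for every
`i ∈ {1, …, 10}`: no projection of this polygon (the knot `8_1`) to a line has
5 local maxima. (With 0-based indexing `i : Fin 10`, the sign is `(−1)^i`.) -/
theorem no_alternating_direction_8_1 :
    ¬ ∃ w : Fin 3 → ℝ, ∀ i : Fin 10,
        0 < (-1 : ℝ) ^ (i : ℕ) * ∑ j : Fin 3, w j * edge8_1 i j := by
  rintro ⟨w, h⟩
  have e0 : edge8_1 0 = ![1000, 0, 0] := by
    funext j; fin_cases j <;> norm_num [edge8_1, vert8_1]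
  have e2 : edge8_1 2 = ![-761, -565, 319] := by
    funext j; fin_cases j <;> simp [edge8_1, vert8_1, show ((2:Fin 10)+1) = 3 from rfl] <;> norm_num
  have e3 : edge8_1 3 = ![792, 610, 11] := by
    funext j; fin_cases j <;> simp [edge8_1, vert8_1, show ((3:Fin 10)+1) = 4 from rfl] <;> norm_num
  have e9 : edge8_1 9 = ![-709, -705, 13] := by
    funext j
    simp only [edge8_1, show ((9:Fin 10)+1) = 0 from rfl,
      show vert8_1 0 = ![0,0,0] from rfl, show vert8_1 9 = ![709,705,-13] from rfl,
      Pi.sub_apply]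
    fin_cases j <;> norm_num
  have h0 := h 0
  have h2 := h 2
  have h3 := h 3
  have h9 := h 9
  rw [e0] at h0; rw [e2] at h2; rw [e3] at h3; rw [e9] at h9
  simp only [Fin.sum_univ_three, show ((0:Fin 10):ℕ) = 0 from rfl,
    show ((2:Fin 10):ℕ) = 2 from rfl, show ((3:Fin 10):ℕ) = 3 from rfl,
    show ((9:Fin 10):ℕ) = 9 from rfl] at h0 h2 h3 h9
  norm_num [Matrix.cons_val_two, Matrix.tail_cons] at h0 h2 h3 h9
  linarith
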